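/- arXiv:2501.10259 — 4 statements merged into one kernel-verified Lean document; each statement's English description precedes it below -/
import Mathlib

section
/- Let G be a group, N a normal subgroup with quotient Q = G/N. Suppose X ⊆ N is a finite monoid generating set for N with language L₁ ⊆ X* whose evaluations are exactly N \ {1} and no word of L₁ evaluates to 1; suppose Y ⊆ G is finite, the images of Y generate Q as a monoid, and L₂ ⊆ Y* is a language such that no word of L₂ evaluates to an element of N and every element of G whose image in Q is non-trivial is N-equivalent to some evaluation of a word in L₂ (i.e. the evaluations of L₂ hit every non-trivial coset of N). Then L' = L₁ ∪ L₂ ∪ L₁L₂ is a language over X ∪ Y such that no word of L' evaluates to 1 in G and every non-identity element of G is the evaluation of some word of L'. -/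
/-- epiC is closed under extensions: the language
`L₁ ∪ L₂ ∪ L₁L₂` works for an extension of `N` by `Q = G/N`. -/
theorem stmt_4 {G : Type*} [Group G] (N : Subgroup G) [N.Normal]
    {X Y : Type*} [Fintype X] [Fintype Y]
    (ιX : X → G) (hXN : ∀ x, ιX x ∈ N)
    (hXgen : Submonoid.closure (Set.range ιX) = N.toSubmonoid)
    (ιY : Y → G)
    (L₁ : Set (List X))
    (hL₁a : ∀ w ∈ L₁, (w.map ιX).prod ≠ 1)
    (hL₁b : ∀ n : G, n ∈ N → n ≠ 1 → ∃ w ∈ L₁, (w.map ιX).prod = n)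
    (L₂ : Set (List Y))
    (hL₂a : ∀ w ∈ L₂, (w.map ιY).prod ∉ N)
    (hL₂b : ∀ g : G, g ∉ N → ∃ w ∈ L₂, ((w.map ιY).prod)⁻¹ * g ∈ N) :
    (∀ w ∈ ((List.map Sum.inl '' L₁) ∪ (List.map Sum.inr '' L₂) ∪
        {w : List (X ⊕ Y) | ∃ u ∈ L₁, ∃ v ∈ L₂, w = u.map Sum.inl ++ v.map Sum.inr}),
      (w.map (Sum.elim ιX ιY)).prod ≠ 1) ∧
    (∀ g : G, g ≠ 1 →
      ∃ w ∈ ((List.map Sum.inl '' L₁) ∪ (List.map Sum.inr '' L₂) ∪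
        {w : List (X ⊕ Y) | ∃ u ∈ L₁, ∃ v ∈ L₂, w = u.map Sum.inl ++ v.map Sum.inr}),
      (w.map (Sum.elim ιX ιY)).prod = g) := by
  have hinl : ∀ u : List X, ((u.map Sum.inl).map (Sum.elim ιX ιY : X ⊕ Y → G)).prod
      = (u.map ιX).prod := by
    intro u; rw [List.map_map]; rfl
  have hinr : ∀ v : List Y, ((v.map Sum.inr).map (Sum.elim ιX ιY : X ⊕ Y → G)).prod
      = (v.map ιY).prod := by
    intro v; rw [List.map_map]; rfl
  constructor
  · rintro w ((⟨u, hu, rfl⟩ | ⟨v, hv, rfl⟩) | ⟨u, hu, v, hv, rfl⟩)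
    · rw [hinl]; exact hL₁a u hu
    · rw [hinr]; intro h
      exact hL₂a v hv (h ▸ N.one_mem)
    · rw [List.map_append, List.prod_append, hinl, hinr]
      intro h
      have : (v.map ιY).prod = ((u.map ιX).prod)⁻¹ :=
        eq_inv_of_mul_eq_one_right h
      apply hL₂a v hv
      rw [this]
      have hn : (u.map ιX).prod ∈ N := by
        have : (u.map ιX).prod ∈ Submonoid.closure (Set.range ιX) := by
          apply list_prod_mem
          intro g hg
          obtain ⟨x, -, rfl⟩ := List.mem_map.mp hg
          exact Submonoid.subset_closure ⟨x, rfl⟩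
        rw [hXgen] at this; exact this
      exact N.inv_mem hn
  · intro g hg
    by_cases hgN : g ∈ N
    · obtain ⟨u, hu, hprod⟩ := hL₁b g hgN hg
      exact ⟨u.map Sum.inl, Or.inl (Or.inl ⟨u, hu, rfl⟩), by rw [hinl]; exact hprod⟩
    · obtain ⟨v, hv, hm⟩ := hL₂b g hgN
      by_cases h1 : (v.map ιY).prod = g
      · exact ⟨v.map Sum.inr, Or.inl (Or.inr ⟨v, hv, rfl⟩), by rw [hinr]; exact h1⟩
      · set m := (v.map ιY).prod with hm'
        have hn : g * m⁻¹ ∈ N := by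
          have := Subgroup.Normal.conj_mem ‹N.Normal› _ hm m
          simpa [mul_assoc] using this
        have hn1 : g * m⁻¹ ≠ 1 := by
          intro h; apply h1
          rw [mul_inv_eq_one] at h; exact h.symm
        obtain ⟨u, hu, hprod⟩ := hL₁b _ hn hn1
        refine ⟨u.map Sum.inl ++ v.map Sum.inr, Or.inr ⟨u, hu, v, hv, rfl⟩, ?_⟩
        rw [List.map_append, List.prod_append, hinl, hinr, hprod, ← hm']
        group
end

section
/- Let G be a group and H ≤ G a subgroup of finite index, with transversal T ∋ 1 of the right cosets (so every g ∈ G is uniquely h·t with h ∈ H, t ∈ T). If X ⊆ H is a finite monoid generating set for H and L ⊆ X* is a language whose set of evaluations is exactly H \ {1}, then the language L ∪ (T \ {1}) ∪ L·(T \ {1}) over the alphabet X ∪ (T \ {1}) has set of evaluations exactly G \ {1}. -/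
/-- epiC passes to finite index overgroups: with `T ∋ 1` a transversal
for the right cosets of `H`, the language `L ∪ (T \ {1}) ∪ L·(T \ {1})` over the
alphabet `X ⊕ (T \ {1})` has evaluation set exactly `G \ {1}`. -/
theorem stmt_6 {G : Type*} [Group G] (H : Subgroup G) [H.FiniteIndex]
    (T : Set G) (hT1 : (1 : G) ∈ T)
    (hT : ∀ g : G, ∃! p : H × T, g = (p.1 : G) * (p.2 : G))
    {X : Type*} [Fintype X] (ιX : X → G) (hXH : ∀ x, ιX x ∈ H)
    (hXgen : Submonoid.closure (Set.range ιX) = H.toSubmonoid)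
    (L : Set (List X))
    (hL : {g : G | ∃ w ∈ L, (w.map ιX).prod = g} = {g : G | g ∈ H ∧ g ≠ 1}) :
    {g : G | ∃ w ∈ ((List.map Sum.inl '' L) ∪
        {w : List (X ⊕ {t : T // (t : G) ≠ 1}) | ∃ t : {t : T // (t : G) ≠ 1}, w = [Sum.inr t]} ∪
        {w : List (X ⊕ {t : T // (t : G) ≠ 1}) |
          ∃ u ∈ L, ∃ t : {t : T // (t : G) ≠ 1}, w = u.map Sum.inl ++ [Sum.inr t]}),
      (w.map (Sum.elim ιX (fun t : {t : T // (t : G) ≠ 1} => ((t.1 : G))))).prod = g} = {g : G | g ≠ 1} := by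
  -- uniqueness at 1 : if h ∈ H, t ∈ T and h * t = 1 then h = 1 and t = 1
  have huniq : ∀ (h : H) (t : T), (h : G) * (t : G) = 1 → (h : G) = 1 ∧ (t : G) = 1 := by
    intro h t hht
    obtain ⟨p, -, hp⟩ := hT 1
    have h1 : (h, t) = p := hp (h, t) hht.symm
    have h2 : ((1 : H), (⟨1, hT1⟩ : T)) = p := hp _ (by simp)
    have := h1.trans h2.symm
    constructor
    · exact congrArg (fun q => ((q.1 : H) : G)) this
    · exact congrArg (fun q => ((q.2 : T) : G)) this
  have hLmem : ∀ u ∈ L, (u.map ιX).prod ∈ H ∧ (u.map ιX).prod ≠ 1 := by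
    intro u hu
    have : (u.map ιX).prod ∈ {g : G | ∃ w ∈ L, (w.map ιX).prod = g} := ⟨u, hu, rfl⟩
    rw [hL] at this
    exact this
  ext g
  simp only [Set.mem_setOf_eq]
  constructor
  · rintro ⟨w, hw, rfl⟩
    rcases hw with (⟨u, hu, rfl⟩ | ⟨t, rfl⟩) | ⟨u, hu, t, rfl⟩
    · have := (hLmem u hu).2
      simpa [List.map_map, Function.comp] using this
    · simpa using t.2
    · have hH := hLmem u hu
      intro hcon
      have heval : ((u.map Sum.inl ++ [Sum.inr t]).map
          (Sum.elim ιX (fun t : {t : T // (t : G) ≠ 1} => ((t.1 : G))))).prod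
          = (u.map ιX).prod * (t.1 : G) := by
        simp [List.map_map, Function.comp]
      rw [heval] at hcon
      have := huniq ⟨(u.map ιX).prod, hH.1⟩ t.1 hcon
      exact hH.2 this.1
  · intro hg
    obtain ⟨⟨h, t⟩, hgdec, -⟩ := hT g
    by_cases ht1 : (t : G) = 1
    · have hgh : g = (h : G) := by rw [hgdec, ht1, mul_one]
      have hh : (h : G) ∈ {g : G | g ∈ H ∧ g ≠ 1} := ⟨h.2, hgh ▸ hg⟩
      rw [← hL] at hh
      obtain ⟨u, hu, hup⟩ := hh
      refine ⟨u.map Sum.inl, Or.inl (Or.inl ⟨u, hu, rfl⟩), ?_⟩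
      rw [hgh, ← hup]
      simp [List.map_map, Function.comp]
    · by_cases hh1 : (h : G) = 1
      · refine ⟨[Sum.inr ⟨t, ht1⟩], Or.inl (Or.inr ⟨⟨t, ht1⟩, rfl⟩), ?_⟩
        simp [hgdec, hh1]
      · have hh : (h : G) ∈ {g : G | g ∈ H ∧ g ≠ 1} := ⟨h.2, hh1⟩
        rw [← hL] at hh
        obtain ⟨u, hu, hup⟩ := hh
        refine ⟨u.map Sum.inl ++ [Sum.inr ⟨t, ht1⟩],
          Or.inr ⟨u, hu, ⟨t, ht1⟩, rfl⟩, ?_⟩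
        rw [hgdec, ← hup]
        simp [List.map_map, Function.comp]
end

section
/- Define on the set Γ₀' = (⊕_{i∈ℤ} ℤ) × (⊕_{i∈ℤ, i>0} ℤ) (finitely supported integer sequences) the operation ((aᵢ),(bᵢ)) · ((cᵢ),(dᵢ)) = ((aᵢ + cᵢ), (bᵢ + dᵢ + Σ_{l−k=i} a_l c_k)). Then this operation is associative, has identity (0,0), and every element has an inverse given by ((aᵢ),(bᵢ))⁻¹ = ((−aᵢ), (Σ_{l−k=i} a_l a_k − bᵢ)); hence Γ₀' is a group. -/
/-- Positive integers, the index set for the second coordinate. -/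
abbrev PosZ : Type := {i : ℤ // 0 < i}

/-- The carrier `Γ₀' = (⊕_{i∈ℤ} ℤ) × (⊕_{i>0} ℤ)` of finitely supported sequences. -/
abbrev Gamma0' : Type := (ℤ →₀ ℤ) × (PosZ →₀ ℤ)

/-- The cross term `(Σ_{l−k=i} a_l c_k)_{i>0}`, as a finitely supported sequence. -/
noncomputable def cross (a c : ℤ →₀ ℤ) : PosZ →₀ ℤ :=
  Finsupp.onFinset
    (((a.support ×ˢ c.support).image fun p => p.1 - p.2).subtype fun i => 0 < i)
    (fun i => ∑ l ∈ a.support, a l * c (l - i.val))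
    (by
      intro i hi
      rw [Finset.mem_subtype]
      obtain ⟨l, hl, hne⟩ := Finset.exists_ne_zero_of_sum_ne_zero hi
      have hc : c (l - i.val) ≠ 0 := fun h => hne (by simp [h])
      exact Finset.mem_image.2 ⟨(l, l - i.val),
        Finset.mem_product.2 ⟨hl, Finsupp.mem_support_iff.2 hc⟩, by ring⟩)

/-- The operation `((aᵢ),(bᵢ)) · ((cᵢ),(dᵢ)) = ((aᵢ+cᵢ), (bᵢ+dᵢ+Σ_{l−k=i} a_l c_k))`. -/
noncomputable def gmul (x y : Gamma0') : Gamma0' := (x.1 + y.1, x.2 + y.2 + cross x.1 y.1)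

/-- The identity element `(0,0)`. -/
noncomputable def gone : Gamma0' := (0, 0)

/-- The proposed inverse `((aᵢ),(bᵢ))⁻¹ = ((−aᵢ), (Σ_{l−k=i} a_l a_k − bᵢ))`. -/
noncomputable def ginv (x : Gamma0') : Gamma0' := (-x.1, cross x.1 x.1 - x.2)

lemma cross_apply_subset (a c : ℤ →₀ ℤ) (s : Finset ℤ) (hs : a.support ⊆ s) (i : PosZ) :
    cross a c i = ∑ l ∈ s, a l * c (l - i.val) := by
  unfold cross
  rw [Finsupp.onFinset_apply]
  exact Finset.sum_subset hs (fun l _ hl => by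
    simp [Finsupp.notMem_support_iff.mp hl])

lemma cross_add_left (a b c : ℤ →₀ ℤ) : cross (a + b) c = cross a c + cross b c := by
  ext i
  rw [Finsupp.add_apply,
    cross_apply_subset (a+b) c (a.support ∪ b.support) Finsupp.support_add,
    cross_apply_subset a c (a.support ∪ b.support) Finset.subset_union_left,
    cross_apply_subset b c (a.support ∪ b.support) Finset.subset_union_right,
    ← Finset.sum_add_distrib]
  exact Finset.sum_congr rfl (fun l _ => by simp [add_mul])

lemma cross_add_right (a c d : ℤ →₀ ℤ) : cross a (c + d) = cross a c + cross a d := by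
  ext i
  simp only [Finsupp.add_apply, cross_apply_subset _ _ a.support (subset_refl _)]
  rw [← Finset.sum_add_distrib]
  exact Finset.sum_congr rfl (fun l _ => by simp [mul_add])

lemma cross_zero_left (c : ℤ →₀ ℤ) : cross 0 c = 0 := by
  ext i; simp [cross_apply_subset 0 c ∅ (by simp)]

lemma cross_zero_right (a : ℤ →₀ ℤ) : cross a 0 = 0 := by
  ext i; simp [cross_apply_subset a 0 a.support (subset_refl _)]

lemma cross_neg_left (a c : ℤ →₀ ℤ) : cross (-a) c = -cross a c := by
  have h := cross_add_left a (-a) c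
  rw [add_neg_cancel, cross_zero_left] at h
  exact eq_neg_of_add_eq_zero_right h.symm

lemma cross_neg_right (a c : ℤ →₀ ℤ) : cross a (-c) = -cross a c := by
  have h := cross_add_right a c (-c)
  rw [add_neg_cancel, cross_zero_right] at h
  exact eq_neg_of_add_eq_zero_right h.symm

/-- the operation on `Γ₀'` is associative, has identity `(0,0)`, and
every element has the stated inverse; hence `Γ₀'` is a group. -/
theorem stmt_10 :
    (∀ x y z : Gamma0', gmul (gmul x y) z = gmul x (gmul y z)) ∧
    (∀ x : Gamma0', gmul gone x = x ∧ gmul x gone = x) ∧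
    (∀ x : Gamma0', gmul x (ginv x) = gone ∧ gmul (ginv x) x = gone) := by
  refine ⟨fun x y z => ?_, fun x => ⟨?_, ?_⟩, fun x => ⟨?_, ?_⟩⟩
  · simp only [gmul, Prod.mk.injEq, cross_add_left, cross_add_right]
    exact ⟨add_assoc _ _ _, by abel⟩
  · simp [gmul, gone, cross_zero_left]
  · simp [gmul, gone, cross_zero_right]
  · simp only [gmul, ginv, gone, cross_neg_right, Prod.mk.injEq]
    exact ⟨by simp, by abel⟩
  · simp only [gmul, ginv, gone, cross_neg_left, Prod.mk.injEq]
    exact ⟨by simp, by abel⟩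
end

section
/- If a class of groups contains the trivial group and each group of a family (G_v)_{v ∈ V} for a finite index set V, and the class epiC is defined via languages closed under finite unions and concatenation, then the direct product of two epiC groups is epiC: if L₁ ⊆ X* has evaluation set G \ {1} and L₂ ⊆ Y* has evaluation set H \ {1} (with no words evaluating to the identity), then L₁ ∪ L₂ ∪ L₁L₂, viewed over the alphabet (X×{1}) ∪ ({1}×Y) inside G × H, contains no word evaluating to (1,1) and its evaluation set is exactly (G × H) \ {(1,1)}. -/
lemma aux_inl {G H X : Type*} [Monoid G] [Monoid H] (ιX : X → G) (u : List X) :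
    (u.map (fun x => ((ιX x, 1) : G × H))).prod = ((u.map ιX).prod, 1) := by
  induction u with
  | nil => simp; rfl
  | cons a t ih => simp [ih, Prod.ext_iff]

lemma aux_inr {G H Y : Type*} [Monoid G] [Monoid H] (ιY : Y → H) (v : List Y) :
    (v.map (fun y => ((1, ιY y) : G × H))).prod = (1, (v.map ιY).prod) := by
  induction v with
  | nil => simp; rfl
  | cons a t ih => simp [ih, Prod.ext_iff]

/-- the direct product of two epiC groups is epiC: over the alphabet
`(X×{1}) ∪ ({1}×Y)` inside `G × H`, the language `L₁ ∪ L₂ ∪ L₁L₂` contains no word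
evaluating to `(1,1)` and its evaluation set is exactly `(G × H) \ {(1,1)}`. -/
theorem stmt_18 {G H : Type*} [Group G] [Group H]
    {X Y : Type*} [Fintype X] [Fintype Y]
    (ιX : X → G) (ιY : Y → H)
    (hXgen : Submonoid.closure (Set.range ιX) = ⊤)
    (hYgen : Submonoid.closure (Set.range ιY) = ⊤)
    (L₁ : Set (List X))
    (hL₁a : ∀ w ∈ L₁, (w.map ιX).prod ≠ 1)
    (hL₁b : ∀ g : G, g ≠ 1 → ∃ w ∈ L₁, (w.map ιX).prod = g)
    (L₂ : Set (List Y))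
    (hL₂a : ∀ w ∈ L₂, (w.map ιY).prod ≠ 1)
    (hL₂b : ∀ h : H, h ≠ 1 → ∃ w ∈ L₂, (w.map ιY).prod = h) :
    (∀ w ∈ ((List.map Sum.inl '' L₁) ∪ (List.map Sum.inr '' L₂) ∪
        {w : List (X ⊕ Y) | ∃ u ∈ L₁, ∃ v ∈ L₂, w = u.map Sum.inl ++ v.map Sum.inr}),
      (w.map (Sum.elim (fun x => ((ιX x, 1) : G × H)) (fun y => ((1, ιY y) : G × H)))).prod
        ≠ 1) ∧
    {p : G × H | ∃ w ∈ ((List.map Sum.inl '' L₁) ∪ (List.map Sum.inr '' L₂) ∪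
        {w : List (X ⊕ Y) | ∃ u ∈ L₁, ∃ v ∈ L₂, w = u.map Sum.inl ++ v.map Sum.inr}),
      (w.map (Sum.elim (fun x => ((ιX x, 1) : G × H)) (fun y => ((1, ιY y) : G × H)))).prod
        = p} = {p : G × H | p ≠ 1} := by
  have evl : ∀ u : List X,
      ((u.map Sum.inl).map (Sum.elim (fun x => ((ιX x, 1) : G × H))
        (fun y => ((1, ιY y) : G × H)))).prod = ((u.map ιX).prod, 1) := by
    intro u
    rw [List.map_map]
    exact aux_inl ιX u
  have evr : ∀ v : List Y,
      ((v.map Sum.inr).map (Sum.elim (fun x => ((ιX x, 1) : G × H))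
        (fun y => ((1, ιY y) : G × H)))).prod = (1, (v.map ιY).prod) := by
    intro v
    rw [List.map_map]
    exact aux_inr ιY v
  constructor
  · rintro w ((⟨u, hu, rfl⟩ | ⟨v, hv, rfl⟩) | ⟨u, hu, v, hv, rfl⟩)
    · rw [evl]
      intro h
      exact hL₁a u hu (by simpa using congrArg Prod.fst h)
    · rw [evr]
      intro h
      exact hL₂a v hv (by simpa using congrArg Prod.snd h)
    · rw [List.map_append, List.prod_append, evl, evr]
      intro h
      exact hL₁a u hu (by simpa using congrArg Prod.fst h)
  · ext ⟨g, h⟩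
    simp only [Set.mem_setOf_eq]
    constructor
    · rintro ⟨w, ((⟨u, hu, rfl⟩ | ⟨v, hv, rfl⟩) | ⟨u, hu, v, hv, rfl⟩), hp⟩
      · rw [evl] at hp
        intro hgh
        rw [hgh] at hp
        exact hL₁a u hu (congrArg Prod.fst hp)
      · rw [evr] at hp
        intro hgh
        rw [hgh] at hp
        exact hL₂a v hv (congrArg Prod.snd hp)
      · rw [List.map_append, List.prod_append, evl, evr] at hp
        simp only [Prod.mk_mul_mk, mul_one, one_mul] at hp
        intro hgh
        rw [hgh] at hp
        exact hL₁a u hu (congrArg Prod.fst hp)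
    · intro hne
      by_cases hg : g = 1
      · have hh : h ≠ 1 := by
          intro hh; exact hne (by rw [hg, hh]; rfl)
        obtain ⟨v, hv, hvp⟩ := hL₂b h hh
        exact ⟨v.map Sum.inr, Or.inl (Or.inr ⟨v, hv, rfl⟩), by rw [evr, hvp, hg]⟩
      by_cases hh : h = 1
      · obtain ⟨u, hu, hup⟩ := hL₁b g hg
        exact ⟨u.map Sum.inl, Or.inl (Or.inl ⟨u, hu, rfl⟩), by rw [evl, hup, hh]⟩
      · obtain ⟨u, hu, hup⟩ := hL₁b g hg
        obtain ⟨v, hv, hvp⟩ := hL₂b h hh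
        refine ⟨u.map Sum.inl ++ v.map Sum.inr,
          Or.inr ⟨u, hu, v, hv, rfl⟩, ?_⟩
        rw [List.map_append, List.prod_append, evl, evr]
        simp [hup, hvp]
end
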